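/- Let the aIR-IG iterates be as in the setup. Then for every k ≥ 0, every i ∈ {1,…,m}, and every y ∈ X, the single-agent step satisfies ‖x_{k,i+1} − y‖² ≤ ‖x_{k,i} − y‖² + γ_k² ( (C + η_k C_f)/m )² + 2 γ_k η_k ( f_i(y) − f_i(x_{k,i}) ) + 2 γ_k ( φ_i(y) − φ_i(x_{k,i}) ). -/

import Mathlib

open RealInnerProductSpace in
lemma proj_sq_le {n : ℕ} {X : Set (EuclideanSpace ℝ (Fin n))} (hXconv : Convex ℝ X)
    (proj : EuclideanSpace ℝ (Fin n) → EuclideanSpace ℝ (Fin n))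
    (hmem : ∀ w, proj w ∈ X)
    (hmin : ∀ w, ∀ u ∈ X, ‖proj w - w‖ ≤ ‖u - w‖)
    (w y : EuclideanSpace ℝ (Fin n)) (hy : y ∈ X) :
    ‖proj w - y‖ ^ 2 ≤ ‖w - y‖ ^ 2 := by
  haveI : Nonempty X := ⟨⟨y, hy⟩⟩
  have heq : ‖w - proj w‖ = ⨅ v : X, ‖w - v‖ := by
    apply le_antisymm
    · apply le_ciInf; intro v
      rw [norm_sub_rev, norm_sub_rev w]
      exact hmin w v v.2
    · have hbdd : BddBelow (Set.range fun v : X => ‖w - v‖) :=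
        ⟨0, by rintro r ⟨v, rfl⟩; exact norm_nonneg _⟩
      exact ciInf_le hbdd ⟨proj w, hmem w⟩
  have h1 : ⟪w - proj w, y - proj w⟫ ≤ 0 :=
    (norm_eq_iInf_iff_real_inner_le_zero hXconv (hmem w)).mp heq y hy
  have h2 := norm_add_sq_real (w - proj w) (proj w - y)
  rw [sub_add_sub_cancel] at h2
  have h3 : ⟪w - proj w, proj w - y⟫ = -⟪w - proj w, y - proj w⟫ := by
    rw [← inner_neg_right, neg_sub]
  nlinarith [sq_nonneg ‖w - proj w‖]

theorem stmt8
    {n : ℕ} (m : ℕ) (hm : 1 ≤ m)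
    (X : Set (EuclideanSpace ℝ (Fin n)))
    (hXne : X.Nonempty) (hXcmp : IsCompact X) (hXconv : Convex ℝ X)
    (f φ : ℕ → EuclideanSpace ℝ (Fin n) → ℝ)
    (hfconv : ∀ i ∈ Finset.Icc 1 m, ConvexOn ℝ Set.univ (f i))
    (hφconv : ∀ i ∈ Finset.Icc 1 m, ConvexOn ℝ Set.univ (φ i))
    (C Cf : ℝ) (hC : 0 < C) (hCf : 0 < Cf)
    (γ η : ℕ → ℝ)
    (hγpos : ∀ k, 0 < γ k) (hηpos : ∀ k, 0 < η k)
    (hγdec : ∀ k, γ (k + 1) ≤ γ k) (hηdec : ∀ k, η (k + 1) ≤ η k)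
    (proj : EuclideanSpace ℝ (Fin n) → EuclideanSpace ℝ (Fin n))
    (hproj_mem : ∀ w, proj w ∈ X)
    (hproj_min : ∀ w, ∀ u ∈ X, ‖proj w - w‖ ≤ ‖u - w‖)
    (x : ℕ → EuclideanSpace ℝ (Fin n))
    (z gφ gf : ℕ → ℕ → EuclideanSpace ℝ (Fin n))
    (hx0 : x 0 ∈ X)
    (hz1 : ∀ k, z k 1 = x k)
    (hzstep : ∀ k, ∀ i ∈ Finset.Icc 1 m,
      z k (i + 1) = proj (z k i - γ k • (gφ k i + η k • gf k i)))
    (hxnext : ∀ k, x (k + 1) = z k (m + 1))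
    (hgφ_sub : ∀ k, ∀ i ∈ Finset.Icc 1 m, ∀ w,
      φ i (z k i) + (inner ℝ (gφ k i) (w - z k i) : ℝ) ≤ φ i w)
    (hgφ_bnd : ∀ k, ∀ i ∈ Finset.Icc 1 m, ‖gφ k i‖ ≤ C / m)
    (hgf_sub : ∀ k, ∀ i ∈ Finset.Icc 1 m, ∀ w,
      f i (z k i) + (inner ℝ (gf k i) (w - z k i) : ℝ) ≤ f i w)
    (hgf_bnd : ∀ k, ∀ i ∈ Finset.Icc 1 m, ‖gf k i‖ ≤ Cf / m)
    (k : ℕ) (i : ℕ) (hi1 : 1 ≤ i) (him : i ≤ m) (y : EuclideanSpace ℝ (Fin n)) (hy : y ∈ X) :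
    ‖z k (i + 1) - y‖ ^ 2
    ≤ ‖z k i - y‖ ^ 2 + γ k ^ 2 * ((C + η k * Cf) / (m : ℝ)) ^ 2 +
        2 * γ k * η k * (f i y - f i (z k i)) +
        2 * γ k * (φ i y - φ i (z k i)) := by
  have hiI : i ∈ Finset.Icc 1 m := Finset.mem_Icc.mpr ⟨hi1, him⟩
  set g : EuclideanSpace ℝ (Fin n) := gφ k i + η k • gf k i with hg
  set w : EuclideanSpace ℝ (Fin n) := z k i - γ k • g with hw
  have hzw : z k (i + 1) = proj w := hzstep k i hiI
  have hstep : ‖z k (i + 1) - y‖ ^ 2 ≤ ‖w - y‖ ^ 2 := by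
    rw [hzw]; exact proj_sq_le hXconv proj hproj_mem hproj_min w y hy
  have hγ := hγpos k
  have hη := hηpos k
  have hm' : (0 : ℝ) < m := by exact_mod_cast hm
  -- expansion
  have hwy : w - y = (z k i - y) - γ k • g := by rw [hw]; abel
  have hA : ‖w - y‖ ^ 2
      = ‖z k i - y‖ ^ 2 - 2 * (γ k * (inner ℝ g (z k i - y) : ℝ)) + γ k ^ 2 * ‖g‖ ^ 2 := by
    rw [hwy, norm_sub_sq_real, real_inner_smul_right, real_inner_comm, norm_smul]
    rw [Real.norm_eq_abs, abs_of_pos hγ, mul_pow]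
  -- inner product split
  have hsplit : (inner ℝ g (z k i - y) : ℝ)
      = (inner ℝ (gφ k i) (z k i - y) : ℝ) + η k * (inner ℝ (gf k i) (z k i - y) : ℝ) := by
    rw [hg, inner_add_left, real_inner_smul_left]
  -- subgradient bounds
  have hφ1 : (inner ℝ (gφ k i) (y - z k i) : ℝ) ≤ φ i y - φ i (z k i) := by
    have := hgφ_sub k i hiI y; linarith
  have hf1 : (inner ℝ (gf k i) (y - z k i) : ℝ) ≤ f i y - f i (z k i) := by
    have := hgf_sub k i hiI y; linarith
  have hφ2 : -(inner ℝ (gφ k i) (z k i - y) : ℝ) ≤ φ i y - φ i (z k i) := by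
    rw [← inner_neg_right, neg_sub]; exact hφ1
  have hf2 : -(inner ℝ (gf k i) (z k i - y) : ℝ) ≤ f i y - f i (z k i) := by
    rw [← inner_neg_right, neg_sub]; exact hf1
  -- norm bound
  have hgn : ‖g‖ ≤ (C + η k * Cf) / m := by
    have h1 : ‖g‖ ≤ ‖gφ k i‖ + ‖η k • gf k i‖ := norm_add_le _ _
    have h2 : ‖η k • gf k i‖ = η k * ‖gf k i‖ := by
      rw [norm_smul, Real.norm_eq_abs, abs_of_pos hη]
    have h3 := hgφ_bnd k i hiI
    have h4 := hgf_bnd k i hiI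
    have h5 : η k * ‖gf k i‖ ≤ η k * (Cf / m) :=
      mul_le_mul_of_nonneg_left h4 hη.le
    have : (C + η k * Cf) / m = C / m + η k * (Cf / m) := by field_simp
    rw [this]; rw [h2] at h1; linarith
  have hgn2 : ‖g‖ ^ 2 ≤ ((C + η k * Cf) / m) ^ 2 :=
    pow_le_pow_left₀ (norm_nonneg _) hgn 2
  have t1 : γ k ^ 2 * ‖g‖ ^ 2 ≤ γ k ^ 2 * ((C + η k * Cf) / m) ^ 2 :=
    mul_le_mul_of_nonneg_left hgn2 (sq_nonneg _)
  have t2 : 2 * γ k * -(inner ℝ (gφ k i) (z k i - y) : ℝ)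
      ≤ 2 * γ k * (φ i y - φ i (z k i)) :=
    mul_le_mul_of_nonneg_left hφ2 (by positivity)
  have t3 : 2 * (γ k * η k) * -(inner ℝ (gf k i) (z k i - y) : ℝ)
      ≤ 2 * (γ k * η k) * (f i y - f i (z k i)) :=
    mul_le_mul_of_nonneg_left hf2 (by positivity)
  rw [hsplit] at hA
  nlinarith [hstep, hA, t1, t2, t3]
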